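/- arXiv:2605.29139 — 2 statements merged into one kernel-verified Lean document; each statement's English description precedes it below -/
import Mathlib

section
/- Let (Z_t) be adapted with Z_t ≥ -b_t pointwise, λ_t predictable with λ_t ∈ [0, 1/b_t], and let G_t be an F_{t-1}-measurable event for each t such that E[Z_t | F_{t-1}] ≤ 0 on G_t. Define E_0 = 1, E_t = E_{t-1}(1 + λ_t Z_t), and the truncated process Ẽ_t = E_t · 1_{∩_{s≤t} G_s}. Then (Ẽ_t) is a nonnegative supermartingale with Ẽ_0 = 1. -/
open MeasureTheory

/-- the truncated betting e-process `Ẽ_t = E_t · 1_{∩_{s≤t} G_s}` is a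
nonnegative supermartingale with `Ẽ_0 = 1`, where `E_0 = 1`,
`E_t = E_{t-1}(1 + λ_t Z_t)`, `Z_t ≥ -b_t`, `λ_t ∈ [0, 1/b_t]` is predictable, each
`G_t` is `F_{t-1}`-measurable, and `E[Z_t | F_{t-1}] ≤ 0` on `G_t`. -/
theorem stmt1
    {Ω : Type*} [m0 : MeasurableSpace Ω] (μ : Measure Ω) [IsProbabilityMeasure μ]
    (𝓕 : Filtration ℕ m0)
    (Z b lam : ℕ → Ω → ℝ) (G : ℕ → Set Ω)
    (hZadapted : Adapted 𝓕 Z)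
    (hZint : ∀ t, Integrable (Z t) μ)
    (hb_pred : ∀ t, Measurable[𝓕 (t - 1)] (b t))
    (hlam_pred : ∀ t, Measurable[𝓕 (t - 1)] (lam t))
    (hG_meas : ∀ t, MeasurableSet[𝓕 (t - 1)] (G t))
    (hb0 : ∀ t ω, 0 < b t ω)
    (hZlo : ∀ t ω, -(b t ω) ≤ Z t ω)
    (hlam0 : ∀ t ω, 0 ≤ lam t ω) (hlam1 : ∀ t ω, lam t ω ≤ 1 / b t ω)
    (hcondZ : ∀ t ≥ 1, ∀ᵐ ω ∂μ, ω ∈ G t → (μ[Z t | 𝓕 (t - 1)]) ω ≤ 0)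
    (E Etil : ℕ → Ω → ℝ)
    (hE0 : ∀ ω, E 0 ω = 1)
    (hErec : ∀ t ω, E (t + 1) ω = E t ω * (1 + lam (t + 1) ω * Z (t + 1) ω))
    (hEtil : ∀ t ω, Etil t ω = E t ω * Set.indicator (⋂ s ∈ Finset.Icc 1 t, G s) 1 ω)
    (hEtil_int : ∀ t, Integrable (Etil t) μ) :
    Supermartingale Etil 𝓕 μ ∧ (∀ ω, Etil 0 ω = 1) ∧ (∀ t ω, 0 ≤ Etil t ω) := by
  -- the factor `1 + λ Z` is nonnegative
  have hfac : ∀ t ω, 0 ≤ 1 + lam t ω * Z t ω := by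
    intro t ω
    have hlb : lam t ω * b t ω ≤ 1 := by
      have := mul_le_mul_of_nonneg_right (hlam1 t ω) (hb0 t ω).le
      rwa [one_div, inv_mul_cancel₀ (hb0 t ω).ne'] at this
    have h1 : -(lam t ω * b t ω) ≤ lam t ω * Z t ω := by
      have := mul_le_mul_of_nonneg_left (hZlo t ω) (hlam0 t ω)
      simpa [mul_neg] using this
    nlinarith
  -- E is nonnegative
  have hEnn : ∀ t ω, 0 ≤ E t ω := by
    intro t
    induction t with
    | zero => intro ω; rw [hE0]; norm_num
    | succ n ih => intro ω; rw [hErec]; exact mul_nonneg (ih ω) (hfac (n + 1) ω)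
  have hEtilnn : ∀ t ω, 0 ≤ Etil t ω := by
    intro t ω
    rw [hEtil]
    exact mul_nonneg (hEnn t ω) (Set.indicator_nonneg (fun _ _ => zero_le_one) ω)
  have hEtil0 : ∀ ω, Etil 0 ω = 1 := by
    intro ω
    rw [hEtil, hE0]
    simp
  -- measurability of E
  have hEmeas : ∀ t, Measurable[𝓕 t] (E t) := by
    intro t
    induction t with
    | zero =>
      have : E 0 = fun _ => (1 : ℝ) := funext hE0
      rw [this]; exact measurable_const
    | succ n ih =>
      have hlm : Measurable[𝓕 n] (lam (n + 1)) := hlam_pred (n + 1)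
      have hE' : E (n + 1) = fun ω => E n ω * (1 + lam (n + 1) ω * Z (n + 1) ω) :=
        funext (hErec n)
      rw [hE']
      exact ((ih.mono (𝓕.mono n.le_succ) le_rfl).mul
        ((measurable_const.add ((hlm.mono (𝓕.mono n.le_succ) le_rfl).mul
          (hZadapted (n + 1)))) : Measurable[𝓕 (n + 1)] _))
  -- measurability of the intersection sets
  have hAmeas : ∀ t, MeasurableSet[𝓕 t] (⋂ s ∈ Finset.Icc 1 t, G s) := by
    intro t
    refine MeasurableSet.biInter (Set.to_countable _) fun s hs => ?_
    have hs' := Finset.mem_Icc.mp hs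
    exact 𝓕.mono (show s - 1 ≤ t by omega) _ (hG_meas s)
  have hEtilmeas : ∀ t, Measurable[𝓕 t] (Etil t) := by
    intro t
    have : Etil t = fun ω => E t ω * Set.indicator (⋂ s ∈ Finset.Icc 1 t, G s) 1 ω :=
      funext (hEtil t)
    rw [this]
    exact (hEmeas t).mul (measurable_const.indicator (hAmeas t))
  -- the one-step supermartingale inequality
  have hstep : ∀ t, μ[Etil (t + 1) | 𝓕 t] ≤ᵐ[μ] Etil t := by
    intro t
    have hGm : MeasurableSet[𝓕 t] (G (t + 1)) := hG_meas (t + 1)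
    set h : Ω → ℝ := Set.indicator (G (t + 1)) (Etil t) with hh
    have hhval : ∀ ω, h ω = Etil t ω * Set.indicator (G (t + 1)) 1 ω := by
      intro ω
      by_cases hω : ω ∈ G (t + 1) <;>
        simp [hh, Set.indicator_of_mem, Set.indicator_of_notMem, hω]
    -- decompose Etil (t+1)
    have hA1 : (⋂ s ∈ Finset.Icc 1 (t + 1), G s)
        = G (t + 1) ∩ ⋂ s ∈ Finset.Icc 1 t, G s := by
      rw [show Finset.Icc 1 (t + 1) = insert (t + 1) (Finset.Icc 1 t) from
        (Finset.insert_Icc_right_eq_Icc_add_one (by omega)).symm]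
      simp [Set.biInter_insert]
    have key : ∀ ω, Etil (t + 1) ω = h ω + (h ω * lam (t + 1) ω) * Z (t + 1) ω := by
      intro ω
      rw [hEtil, hErec, hA1, Set.inter_indicator_one, hhval ω, hEtil]
      simp only [Pi.mul_apply]
      ring
    have hint_h : Integrable h μ := (hEtil_int t).indicator (𝓕.le t _ hGm)
    have hsm_h : StronglyMeasurable[𝓕 t] h :=
      ((hEtilmeas t).indicator hGm).stronglyMeasurable
    have hsm_hl : StronglyMeasurable[𝓕 t] (fun ω => h ω * lam (t + 1) ω) :=
      (((hEtilmeas t).indicator hGm).mul (hlam_pred (t + 1))).stronglyMeasurable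
    have hint_hlZ : Integrable (fun ω => (h ω * lam (t + 1) ω) * Z (t + 1) ω) μ := by
      have : (fun ω => (h ω * lam (t + 1) ω) * Z (t + 1) ω)
          = fun ω => Etil (t + 1) ω - h ω := by
        funext ω; rw [key ω]; ring
      rw [this]
      exact (hEtil_int (t + 1)).sub hint_h
    have hEtil_eq : Etil (t + 1)
        = h + fun ω => (h ω * lam (t + 1) ω) * Z (t + 1) ω := by
      funext ω; exact key ω
    have hce1 : μ[Etil (t + 1) | 𝓕 t]
        =ᵐ[μ] μ[h | 𝓕 t] + μ[fun ω => (h ω * lam (t + 1) ω) * Z (t + 1) ω | 𝓕 t] := by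
      rw [hEtil_eq]
      exact condExp_add hint_h hint_hlZ _
    have hce2 : μ[h | 𝓕 t] = h := condExp_of_stronglyMeasurable (𝓕.le t) hsm_h hint_h
    have hce3 : μ[fun ω => (h ω * lam (t + 1) ω) * Z (t + 1) ω | 𝓕 t]
        =ᵐ[μ] fun ω => (h ω * lam (t + 1) ω) * (μ[Z (t + 1) | 𝓕 t]) ω := by
      have := condExp_mul_of_stronglyMeasurable_left hsm_hl
        (show Integrable ((fun ω => h ω * lam (t + 1) ω) * Z (t + 1)) μ from hint_hlZ)
        (hZint (t + 1))
      exact this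
    have hcond := hcondZ (t + 1) (by omega)
    filter_upwards [hce1, hce3, hcond] with ω h1 h3 hc
    rw [h1]
    simp only [Pi.add_apply, hce2, h3]
    by_cases hω : ω ∈ G (t + 1)
    · have hz : (μ[Z (t + 1) | 𝓕 t]) ω ≤ 0 := hc hω
      have hhω : h ω = Etil t ω := Set.indicator_of_mem hω _
      have : (h ω * lam (t + 1) ω) * (μ[Z (t + 1) | 𝓕 t]) ω ≤ 0 :=
        mul_nonpos_of_nonneg_of_nonpos
          (mul_nonneg (hhω ▸ hEtilnn t ω) (hlam0 (t + 1) ω)) hz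
      linarith [this, hhω.le]
    · have hhω : h ω = 0 := Set.indicator_of_notMem hω _
      rw [hhω]
      simpa using hEtilnn t ω
  refine ⟨supermartingale_nat (fun t => (hEtilmeas t).stronglyMeasurable) hEtil_int hstep,
    hEtil0, hEtilnn⟩
end

section
/- Let P and Q be probability measures on a finite set with KL(P‖Q) = ε. Then E_P[|log(P(y)/Q(y))|] ≤ ε + √(2ε). -/
open Real Set

private noncomputable def gfun (t : ℝ) : ℝ :=
  (2*t+4)*(t*Real.log t - t + 1) - 3*(t-1)^2

private noncomputable def pfun (t : ℝ) : ℝ :=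
  (t+1)*Real.log t - 2*t + 2

private lemma pfun_deriv {t : ℝ} (ht : 0 < t) :
    HasDerivAt pfun (Real.log t + 1/t - 1) t := by
  have h1 : HasDerivAt (fun t : ℝ => (t+1)*Real.log t)
      (1 * Real.log t + (t+1) * t⁻¹) t :=
    ((hasDerivAt_id t).add_const 1).mul (Real.hasDerivAt_log ht.ne')
  have h2 := (h1.sub ((hasDerivAt_id t).const_mul 2)).add_const 2
  refine h2.congr_deriv ?_
  field_simp
  ring

private lemma pfun_mono : MonotoneOn pfun (Set.Ioi (0:ℝ)) := by
  have : interior (Set.Ioi (0:ℝ)) = Set.Ioi 0 := interior_Ioi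
  refine monotoneOn_of_deriv_nonneg (convex_Ioi 0) ?_ ?_ ?_
  · intro x hx
    exact ((pfun_deriv hx).continuousAt).continuousWithinAt
  · rw [this]
    intro x hx
    exact (pfun_deriv hx).differentiableAt.differentiableWithinAt
  · rw [this]
    intro x hx
    simp only [Set.mem_Ioi] at hx
    rw [(pfun_deriv hx).deriv]
    have := Real.log_le_sub_one_of_pos (show (0:ℝ) < 1/x by positivity)
    rw [Real.log_div one_ne_zero (ne_of_gt hx)] at this
    simp only [Real.log_one, zero_sub, one_div] at this
    rw [one_div]
    linarith

private lemma gfun_deriv {t : ℝ} (ht : 0 < t) :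
    HasDerivAt gfun (4 * pfun t) t := by
  have h1 : HasDerivAt (fun t : ℝ => t * Real.log t) (1 * Real.log t + t * t⁻¹) t :=
    (hasDerivAt_id t).mul (Real.hasDerivAt_log ht.ne')
  have h2 := (h1.sub (hasDerivAt_id t)).add_const 1
  have h3 := ((hasDerivAt_id t).const_mul 2).add_const 4
  have h4 := (((hasDerivAt_id t).sub_const 1).pow 2).const_mul 3
  have h5 := (h3.mul h2).sub h4
  refine h5.congr_deriv ?_
  unfold pfun
  simp only [Pi.sub_apply, id]
  field_simp
  ring

private lemma gfun_cont : Continuous gfun := by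
  unfold gfun
  have := Real.continuous_mul_log
  continuity

private lemma gfun_nonneg {t : ℝ} (ht : 0 < t) : 0 ≤ gfun t := by
  have hg1 : gfun 1 = 0 := by simp [gfun]
  rcases le_total t 1 with h | h
  · have hanti : AntitoneOn gfun (Set.Icc 0 1) := by
      refine antitoneOn_of_deriv_nonpos (convex_Icc 0 1) gfun_cont.continuousOn ?_ ?_
      · rw [interior_Icc]
        intro x hx
        exact (gfun_deriv hx.1).differentiableAt.differentiableWithinAt
      · rw [interior_Icc]
        intro x hx
        rw [(gfun_deriv hx.1).deriv]
        have := pfun_mono hx.1 (show (1:ℝ) ∈ Set.Ioi (0:ℝ) by norm_num) hx.2.le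
        have h1 : pfun 1 = 0 := by simp [pfun]
        nlinarith
    have := hanti ⟨ht.le, h⟩ (by norm_num : (1:ℝ) ∈ Set.Icc (0:ℝ) 1) h
    linarith [hg1 ▸ this]
  · have hmono : MonotoneOn gfun (Set.Ici 1) := by
      refine monotoneOn_of_deriv_nonneg (convex_Ici 1) gfun_cont.continuousOn ?_ ?_
      · rw [interior_Ici]
        intro x hx
        have : (0:ℝ) < x := lt_trans one_pos hx
        exact (gfun_deriv this).differentiableAt.differentiableWithinAt
      · rw [interior_Ici]
        intro x hx
        have hx0 : (0:ℝ) < x := lt_trans one_pos hx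
        rw [(gfun_deriv hx0).deriv]
        have := pfun_mono (show (1:ℝ) ∈ Set.Ioi (0:ℝ) by norm_num) hx0 hx.le
        have h1 : pfun 1 = 0 := by simp [pfun]
        nlinarith
    have := hmono (by norm_num : (1:ℝ) ∈ Set.Ici (1:ℝ)) h h
    linarith [hg1 ▸ this]

/-- pointwise inequality behind Pinsker -/
private lemma key_ineq {x y : ℝ} (hx : 0 ≤ x) (hy : 0 < y) :
    3*(x-y)^2 ≤ (2*x+4*y)*(x*Real.log (x/y) - x + y) := by
  rcases eq_or_lt_of_le hx with h | h
  · simp [← h]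
    nlinarith
  · have ht : 0 < x / y := div_pos h hy
    have hg := gfun_nonneg ht
    unfold gfun at hg
    have e1 : y^2 * ((2*(x/y)+4)*((x/y)*Real.log (x/y) - x/y + 1) - 3*(x/y-1)^2)
        = (2*x+4*y)*(x*Real.log (x/y)-x+y) - 3*(x-y)^2 := by
      field_simp
    have h2 := mul_nonneg (sq_nonneg y) hg
    rw [e1] at h2
    linarith

/-- for probability mass functions `P, Q` on a finite set with
`KL(P‖Q) = ε`, the expected absolute log-ratio satisfies
`E_P[|log(P(y)/Q(y))|] ≤ ε + √(2ε)`. -/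
theorem stmt9
    {α : Type*} [Fintype α]
    (P Q : α → ℝ) (ε : ℝ)
    (hP0 : ∀ y, 0 ≤ P y) (hQ0 : ∀ y, 0 < Q y)
    (hPsum : ∑ y, P y = 1) (hQsum : ∑ y, Q y = 1)
    (hKL : ∑ y, P y * Real.log (P y / Q y) = ε) :
    ∑ y, P y * |Real.log (P y / Q y)| ≤ ε + Real.sqrt (2 * ε) := by
  set L : α → ℝ := fun y => Real.log (P y / Q y) with hL
  set d : α → ℝ := fun y => P y * L y - P y + Q y with hd
  have hkey : ∀ y, 3*(P y - Q y)^2 ≤ (2*P y + 4*Q y) * d y := fun y =>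
    key_ineq (hP0 y) (hQ0 y)
  have hdnn : ∀ y, 0 ≤ d y := by
    intro y
    have h1 := hkey y
    have h2 : 0 < 2*P y + 4*Q y := by have := hP0 y; have := hQ0 y; linarith
    nlinarith [sq_nonneg (P y - Q y)]
  have hsumd : ∑ y, d y = ε := by
    simp only [hd, Finset.sum_add_distrib, Finset.sum_sub_distrib]
    rw [hKL, hPsum, hQsum]
    ring
  have hε : 0 ≤ ε := hsumd ▸ Finset.sum_nonneg (fun y _ => hdnn y)
  -- Pinsker via Cauchy-Schwarz
  have hTV : ∑ y, |P y - Q y| ≤ Real.sqrt (2 * ε) := by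
    have hcs := Finset.sum_mul_sq_le_sq_mul_sq Finset.univ
      (fun y => Real.sqrt ((2*P y + 4*Q y)/3)) (fun y => Real.sqrt (d y))
    have hfg : ∀ y, |P y - Q y| ≤ Real.sqrt ((2*P y + 4*Q y)/3) * Real.sqrt (d y) := by
      intro y
      rw [← Real.sqrt_mul (by have := hP0 y; have := hQ0 y; linarith) (d y),
        ← Real.sqrt_sq_eq_abs]
      apply Real.sqrt_le_sqrt
      rw [div_mul_eq_mul_div, le_div_iff₀ (by norm_num : (0:ℝ) < 3)]
      linarith [hkey y]
    have hsum1 : ∑ y, |P y - Q y| ≤ ∑ y, Real.sqrt ((2*P y + 4*Q y)/3) * Real.sqrt (d y) :=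
      Finset.sum_le_sum (fun y _ => hfg y)
    have hsq1 : ∑ y, (Real.sqrt ((2*P y + 4*Q y)/3))^2 = 2 := by
      have : ∀ y, (Real.sqrt ((2*P y + 4*Q y)/3))^2 = (2*P y + 4*Q y)/3 := by
        intro y
        exact Real.sq_sqrt (by have := hP0 y; have := hQ0 y; linarith)
      rw [Finset.sum_congr rfl (fun y _ => this y)]
      rw [show (fun y => (2*P y + 4*Q y)/3) = (fun y => (2*P y + 4*Q y)/3) from rfl]
      have : ∑ y, (2*P y + 4*Q y)/3 = (2 * ∑ y, P y + 4 * ∑ y, Q y)/3 := by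
        rw [Finset.mul_sum, Finset.mul_sum, ← Finset.sum_add_distrib, ← Finset.sum_div]
      rw [this, hPsum, hQsum]
      norm_num
    have hsq2 : ∑ y, (Real.sqrt (d y))^2 = ε := by
      rw [Finset.sum_congr rfl (fun y _ => Real.sq_sqrt (hdnn y))]
      exact hsumd
    rw [hsq1, hsq2] at hcs
    have habs : 0 ≤ ∑ y, |P y - Q y| := Finset.sum_nonneg (fun y _ => abs_nonneg _)
    rw [Real.le_sqrt habs (by linarith)]
    calc (∑ y, |P y - Q y|)^2
        ≤ (∑ y, Real.sqrt ((2*P y + 4*Q y)/3) * Real.sqrt (d y))^2 := by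
          apply pow_le_pow_left₀ habs hsum1
      _ ≤ 2 * ε := hcs
  -- pointwise bound
  have hpt : ∀ y, P y * |L y| ≤ P y * L y + (Q y - P y) + |P y - Q y| := by
    intro y
    rcases le_or_gt 0 (L y) with h | h
    · rw [abs_of_nonneg h]
      have := le_abs_self (P y - Q y)
      linarith
    · rw [abs_of_neg h]
      have hPpos : 0 < P y := by
        rcases eq_or_lt_of_le (hP0 y) with he | he
        · exfalso
          have : L y = 0 := by simp [hL, ← he]
          linarith
        · exact he
      have hlog : Real.log (Q y / P y) ≤ Q y / P y - 1 :=
        Real.log_le_sub_one_of_pos (div_pos (hQ0 y) hPpos)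
      have hneg : -L y = Real.log (Q y / P y) := by
        simp only [hL]
        rw [Real.log_div (ne_of_gt hPpos) (ne_of_gt (hQ0 y)),
          Real.log_div (ne_of_gt (hQ0 y)) (ne_of_gt hPpos)]
        ring
      have h1 : P y * (-L y) ≤ Q y - P y := by
        rw [hneg]
        have := mul_le_mul_of_nonneg_left hlog hPpos.le
        rw [mul_sub, mul_one, mul_div_cancel₀ _ (ne_of_gt hPpos)] at this
        linarith
      have h2 : Q y - P y ≤ |P y - Q y| := by
        rw [abs_sub_comm]
        exact le_abs_self _
      nlinarith
  calc ∑ y, P y * |L y|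
      ≤ ∑ y, (P y * L y + (Q y - P y) + |P y - Q y|) :=
        Finset.sum_le_sum (fun y _ => hpt y)
    _ = ε + Real.sqrt (2*ε) + (∑ y, |P y - Q y| - Real.sqrt (2*ε)) := by
        simp only [Finset.sum_add_distrib, Finset.sum_sub_distrib]
        rw [hKL, hPsum, hQsum]
        ring
    _ ≤ ε + Real.sqrt (2*ε) := by linarith
end
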